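/- Let φ : A⁺ → S be a surjective homomorphism onto a finite semigroup. Define u ≡_{φ,Sl} v iff the paths p_u and p_v in the two-sided Cayley graph Γ_φ traverse the same set of edges (same content). Then ≡_{φ,Sl} refines the kernel of φ (u ≡_{φ,Sl} v implies φ(u) = φ(v)) and ≡_{φ,Sl} is a congruence of finite index on A⁺. -/
import Mathlib


variable {A S : Type*}

/-- Image of a word under the extension of `φ` to the free monoid, in `S¹ = WithOne S`. -/
def phiStar [Semigroup S] (φ : A → S) (w : List A) : WithOne S :=
  (w.map fun a => (φ a : WithOne S)).prod

/-- `φ` induces a surjective homomorphism `A⁺ → S`. -/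
def PlusSurj [Semigroup S] (φ : A → S) : Prop :=
  ∀ s : S, ∃ w : List A, w ≠ [] ∧ phiStar φ w = (s : WithOne S)

/-- An edge `((s₁,t₁), a, (s₂,t₂))` of the two-sided Cayley graph `Γ_φ`. -/
def IsEdge [Semigroup S] (φ : A → S)
    (e : (WithOne S × WithOne S) × A × (WithOne S × WithOne S)) : Prop :=
  e.1.1 * (φ e.2.1 : WithOne S) = e.2.2.1 ∧ e.1.2 = (φ e.2.1 : WithOne S) * e.2.2.2

/-- There is a path labeled `w` from `p` to `q` in `Γ_φ`. -/
def HasPath [Semigroup S] (φ : A → S) (p q : WithOne S × WithOne S) (w : List A) : Prop :=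
  p.1 * phiStar φ w = q.1 ∧ p.2 = phiStar φ w * q.2

/-- There is a (possibly empty) path from `p` to `q` in `Γ_φ`. -/
def Reach [Semigroup S] (φ : A → S) (p q : WithOne S × WithOne S) : Prop :=
  ∃ w : List A, HasPath φ p q w

/-- `p` and `q` lie in the same strongly connected component of `Γ_φ`. -/
def SameSCC [Semigroup S] (φ : A → S) (p q : WithOne S × WithOne S) : Prop :=
  Reach φ p q ∧ Reach φ q p

/-- `p` is a vertex of the canonical path `p_u` of the word `u` in `Γ_φ`. -/
def OnPath [Semigroup S] (φ : A → S) (u : List A) (p : WithOne S × WithOne S) : Prop :=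
  ∃ u₁ u₂ : List A, u = u₁ ++ u₂ ∧ p = (phiStar φ u₁, phiStar φ u₂)

/-- The paths `p_u` and `p_v` meet the same strongly connected components of `Γ_φ`,
i.e. `C(p_u) = C(p_v)`. -/
def SameComponents [Semigroup S] (φ : A → S) (u v : List A) : Prop :=
  (∀ p, OnPath φ u p → ∃ q, OnPath φ v q ∧ SameSCC φ p q) ∧
  (∀ q, OnPath φ v q → ∃ p, OnPath φ u p ∧ SameSCC φ p q)

/-- The two-sided connected congruence `u ≈_φ v`. -/
def ConnCong [Semigroup S] (φ : A → S) (u v : List A) : Prop :=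
  phiStar φ u = phiStar φ v ∧ SameComponents φ u v

/-- `e` is an edge traversed by the canonical path `p_u` in `Γ_φ`. -/
def EdgeOfPath [Semigroup S] (φ : A → S) (u : List A)
    (e : (WithOne S × WithOne S) × A × (WithOne S × WithOne S)) : Prop :=
  ∃ u₁ u₂ : List A, u = u₁ ++ e.2.1 :: u₂ ∧
    e.1 = (phiStar φ u₁, phiStar φ (e.2.1 :: u₂)) ∧
    e.2.2 = (phiStar φ (u₁ ++ [e.2.1]), phiStar φ u₂)

/-- `e` is a transition edge traversed by `p_u`: an edge of `p_u` whose endpoints lie in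
distinct strongly connected components of `Γ_φ`. -/
def IsTransitionOfPath [Semigroup S] (φ : A → S) (u : List A)
    (e : (WithOne S × WithOne S) × A × (WithOne S × WithOne S)) : Prop :=
  EdgeOfPath φ u e ∧ ¬ SameSCC φ e.1 e.2.2

/-- The two-sided Karnofsky–Rhodes congruence `u ≡_φ v`: same image under `φ` and same set
of transition edges. -/
def KRCong [Semigroup S] (φ : A → S) (u v : List A) : Prop :=
  phiStar φ u = phiStar φ v ∧
  ∀ e, IsTransitionOfPath φ u e ↔ IsTransitionOfPath φ v e


/-- The content relation `≡_{φ,Sl}` (same set of edges traversed). -/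
def ContCong [Semigroup S] (φ : A → S) (u v : List A) : Prop :=
  ∀ e, EdgeOfPath φ u e ↔ EdgeOfPath φ v e

section Aux
variable [Semigroup S] (φ : A → S)

lemma phiStar_nil : phiStar φ ([] : List A) = 1 := rfl

lemma phiStar_cons (a : A) (w : List A) :
    phiStar φ (a :: w) = (φ a : WithOne S) * phiStar φ w := by
  simp [phiStar]

lemma phiStar_append (u v : List A) :
    phiStar φ (u ++ v) = phiStar φ u * phiStar φ v := by
  simp [phiStar]

lemma phiStar_exists_coe : ∀ w : List A, w ≠ [] → ∃ s : S, phiStar φ w = (s : WithOne S)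
  | [], h => absurd rfl h
  | [a], _ => ⟨φ a, by simp [phiStar]⟩
  | a :: b :: t, _ => by
    obtain ⟨s, hs⟩ := phiStar_exists_coe (b :: t) (by simp)
    exact ⟨φ a * s, by rw [phiStar_cons, hs]; simp⟩

lemma phiStar_eq_one (w : List A) (h : phiStar φ w = 1) : w = [] := by
  by_contra hne
  obtain ⟨s, hs⟩ := phiStar_exists_coe φ w hne
  rw [hs] at h
  exact WithOne.coe_ne_one h

lemma edgeOfPath_intro (u₁ u₂ : List A) (a : A) :
    EdgeOfPath φ (u₁ ++ a :: u₂)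
      ((phiStar φ u₁, phiStar φ (a :: u₂)), a, (phiStar φ (u₁ ++ [a]), phiStar φ u₂)) :=
  ⟨u₁, u₂, rfl, rfl, rfl⟩

lemma edgeOfPath_of_eq {U : List A} (V₁ V₂ : List A) {p1 p2 q1 q2 : WithOne S} {a : A}
    (hsp : U = V₁ ++ a :: V₂) (h1 : p1 = phiStar φ V₁) (h2 : p2 = phiStar φ (a :: V₂))
    (h3 : q1 = phiStar φ (V₁ ++ [a])) (h4 : q2 = phiStar φ V₂) :
    EdgeOfPath φ U ((p1, p2), a, (q1, q2)) :=
  ⟨V₁, V₂, hsp, by rw [h1, h2], by rw [h3, h4]⟩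

lemma edgeOfPath_elim {u : List A} {p1 p2 q1 q2 : WithOne S} {a : A}
    (h : EdgeOfPath φ u ((p1, p2), a, (q1, q2))) :
    ∃ u₁ u₂ : List A, u = u₁ ++ a :: u₂ ∧ p1 = phiStar φ u₁ ∧ p2 = phiStar φ (a :: u₂) ∧
      q1 = phiStar φ (u₁ ++ [a]) ∧ q2 = phiStar φ u₂ := by
  obtain ⟨u₁, u₂, hs, h1, h2⟩ := h
  exact ⟨u₁, u₂, hs, congrArg Prod.fst h1, congrArg Prod.snd h1,
    congrArg Prod.fst h2, congrArg Prod.snd h2⟩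

lemma contCong_phiStar (u v : List A) (hu : u ≠ [])
    (h : ContCong φ u v) : phiStar φ u = phiStar φ v := by
  rcases List.eq_nil_or_concat u with rfl | ⟨u', a, rfl⟩
  · exact absurd rfl hu
  · rw [List.concat_eq_append] at *
    have he := (h _).mp (edgeOfPath_intro φ u' [] a)
    obtain ⟨v₁, v₂, hv, _, _, g3, g4⟩ := edgeOfPath_elim φ he
    have hv2 : v₂ = [] := phiStar_eq_one φ v₂ g4.symm
    rw [hv, hv2, ← g3]

lemma edge_append_right (u v w : List A) (huv : phiStar φ u = phiStar φ v)
    (h : ∀ e, EdgeOfPath φ u e → EdgeOfPath φ v e) :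
    ∀ e, EdgeOfPath φ (u ++ w) e → EdgeOfPath φ (v ++ w) e := by
  rintro ⟨⟨p1, p2⟩, a, q1, q2⟩ he
  obtain ⟨u₁, u₂, hsplit, hp1, hp2, hq1, hq2⟩ := edgeOfPath_elim φ he
  rcases List.append_eq_append_iff.mp hsplit with ⟨l, hl1, hl2⟩ | ⟨c, hc1, hc2⟩
  · -- split in w : u₁ = u ++ l, w = l ++ a :: u₂
    exact edgeOfPath_of_eq φ (v ++ l) u₂ (by rw [hl2, List.append_assoc])
      (by rw [hp1, hl1]; simp [phiStar_append, huv]) hp2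
      (by rw [hq1, hl1]; simp [phiStar_append, huv, mul_assoc]) hq2
  · rcases c with _ | ⟨a', c'⟩
    · -- u = u₁, w = a :: u₂
      simp only [List.append_nil] at hc1
      simp only [List.nil_append] at hc2
      exact edgeOfPath_of_eq φ v u₂ (by rw [← hc2])
        (by rw [hp1, ← hc1, huv]) hp2
        (by rw [hq1, ← hc1]; simp [phiStar_append, huv]) hq2
    · -- u = u₁ ++ a :: c', u₂ = c' ++ w
      rw [List.cons_append] at hc2
      obtain ⟨ha, hu2⟩ := List.cons_eq_cons.mp hc2
      rw [← ha] at hc1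
      have he' := h _ (hc1 ▸ edgeOfPath_intro φ u₁ c' a)
      obtain ⟨v₁, v₂, hv, g1, g2, g3, g4⟩ := edgeOfPath_elim φ he'
      exact edgeOfPath_of_eq φ v₁ (v₂ ++ w) (by rw [hv]; simp)
        (by rw [hp1, g1])
        (by rw [hp2, hu2]; simp [phiStar_cons, phiStar_append, g4, mul_assoc])
        (by rw [hq1, g3])
        (by rw [hq2, hu2]; simp [phiStar_append, g4])

lemma edge_append_left (u v w : List A) (huv : phiStar φ u = phiStar φ v)
    (h : ∀ e, EdgeOfPath φ u e → EdgeOfPath φ v e) :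
    ∀ e, EdgeOfPath φ (w ++ u) e → EdgeOfPath φ (w ++ v) e := by
  rintro ⟨⟨p1, p2⟩, a, q1, q2⟩ he
  obtain ⟨u₁, u₂, hsplit, hp1, hp2, hq1, hq2⟩ := edgeOfPath_elim φ he
  rcases List.append_eq_append_iff.mp hsplit with ⟨l, hl1, hl2⟩ | ⟨c, hc1, hc2⟩
  · -- split in u : u₁ = w ++ l, u = l ++ a :: u₂
    have he' := h _ (hl2 ▸ edgeOfPath_intro φ l u₂ a)
    obtain ⟨v₁, v₂, hv, g1, g2, g3, g4⟩ := edgeOfPath_elim φ he'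
    exact edgeOfPath_of_eq φ (w ++ v₁) v₂ (by rw [hv]; simp)
      (by rw [hp1, hl1]; simp [phiStar_append, g1])
      (by rw [hp2, g2])
      (by rw [hq1, hl1]; simp [phiStar_append, g3, mul_assoc])
      (by rw [hq2, g4])
  · rcases c with _ | ⟨a', c'⟩
    · -- w = u₁, u = a :: u₂
      simp only [List.append_nil] at hc1
      simp only [List.nil_append] at hc2
      have he' := h _ (hc2 ▸ edgeOfPath_intro φ [] u₂ a)
      obtain ⟨v₁, v₂, hv, g1, g2, g3, g4⟩ := edgeOfPath_elim φ he'
      exact edgeOfPath_of_eq φ (w ++ v₁) v₂ (by rw [hv]; simp)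
        (by rw [hp1, hc1]; simp [phiStar_append, ← g1, phiStar_nil])
        (by rw [hp2, hc2]; exact g2)
        (by rw [hq1, hc1]; simp [phiStar_append, ← g1, phiStar_nil])
        (by rw [hq2, g4])
    · -- w = u₁ ++ a :: c', u₂ = c' ++ u
      rw [List.cons_append] at hc2
      obtain ⟨ha, hu2⟩ := List.cons_eq_cons.mp hc2
      rw [← ha] at hc1
      exact edgeOfPath_of_eq φ u₁ (c' ++ v) (by rw [hc1]; simp)
        hp1
        (by rw [hp2, hu2]; simp [phiStar_cons, phiStar_append, huv, mul_assoc])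
        hq1
        (by rw [hq2, hu2]; simp [phiStar_append, huv])

lemma contCong_append {u v : List A} (w : List A) (h : ContCong φ u v)
    (huv : phiStar φ u = phiStar φ v) :
    ContCong φ (u ++ w) (v ++ w) ∧ ContCong φ (w ++ u) (w ++ v) := by
  constructor
  · intro e
    exact ⟨edge_append_right φ u v w huv (fun e' => (h e').mp) e,
      edge_append_right φ v u w huv.symm (fun e' => (h e').mpr) e⟩
  · intro e
    exact ⟨edge_append_left φ u v w huv (fun e' => (h e').mp) e,
      edge_append_left φ v u w huv.symm (fun e' => (h e').mpr) e⟩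

end Aux

/-- `≡_{φ,Sl}` refines the kernel of `φ` and is a congruence of finite index on `A⁺`. -/
theorem contCong_congruence_finite_index [Finite A] [Finite S] [Semigroup S]
    (φ : A → S) (hφ : PlusSurj φ) :
    (∀ u v : List A, u ≠ [] → v ≠ [] → ContCong φ u v → phiStar φ u = phiStar φ v) ∧
    (∀ u : List A, u ≠ [] → ContCong φ u u) ∧
    (∀ u v : List A, u ≠ [] → v ≠ [] → ContCong φ u v → ContCong φ v u) ∧
    (∀ u v w : List A, u ≠ [] → v ≠ [] → w ≠ [] →
      ContCong φ u v → ContCong φ v w → ContCong φ u w) ∧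
    (∀ u v w : List A, u ≠ [] → v ≠ [] → w ≠ [] → ContCong φ u v →
      ContCong φ (u ++ w) (v ++ w) ∧ ContCong φ (w ++ u) (w ++ v)) ∧
    Finite (Quot fun u v : {w : List A // w ≠ []} => ContCong φ u.1 v.1) := by
  refine ⟨fun u v hu _ h => contCong_phiStar φ u v hu h,
    fun u _ e => Iff.rfl,
    fun u v _ _ h e => (h e).symm,
    fun u v w _ _ _ h1 h2 e => (h1 e).trans (h2 e),
    fun u v w hu hv _ h => contCong_append φ w h (contCong_phiStar φ u v hu h), ?_⟩
  have hlift : ∀ u v : {w : List A // w ≠ []}, ContCong φ u.1 v.1 →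
      {e : (WithOne S × WithOne S) × A × (WithOne S × WithOne S) | EdgeOfPath φ u.1 e} =
      {e : (WithOne S × WithOne S) × A × (WithOne S × WithOne S) | EdgeOfPath φ v.1 e} :=
    fun u v h => Set.ext fun e => h e
  have hinj : Function.Injective (Quot.lift
      (fun u : {w : List A // w ≠ []} =>
        {e : (WithOne S × WithOne S) × A × (WithOne S × WithOne S) | EdgeOfPath φ u.1 e})
      hlift) := by
    intro x y
    induction x using Quot.ind with | _ u =>
    induction y using Quot.ind with | _ v =>
    intro h
    exact Quot.sound fun e => Set.ext_iff.mp h e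
  haveI := Fintype.ofFinite S
  haveI : Finite (WithOne S) := inferInstanceAs (Finite (Option S))
  exact Finite.of_injective _ hinj
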